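/- Let D be a dyadic grid on a space of homogeneous type (X,d,μ) and fix 0 < η < 1. Set s = 1/(1−η). Then M^D_η satisfies the weak (1,s) inequality: for every f ∈ L¹(X) and every t > 0, t · μ({x ∈ X : M^D_η f(x) > t})^{1/s} ≤ ‖f‖_{L¹(X)}. -/

import Mathlib

open MeasureTheory ENNReal Filter

/-- Quasi-metric ball. -/
def qball {X : Type*} (d : X → X → ℝ) (x : X) (r : ℝ) : Set X := {y | d x y < r}

/-- `(X,d)` is a quasi-metric space with quasi-metric constant `A₀`. -/
def IsQuasiMetric {X : Type*} (d : X → X → ℝ) (A₀ : ℝ) : Prop :=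
  1 ≤ A₀ ∧ (∀ x y, 0 ≤ d x y) ∧ (∀ x y, d x y = 0 ↔ x = y) ∧ (∀ x y, d x y = d y x) ∧
    ∀ x y z, d x y ≤ A₀ * (d x z + d y z)

/-- `μ` is doubling with doubling constant `Cμ` for quasi-metric balls. -/
def IsDoubling {X : Type*} [MeasurableSpace X] (d : X → X → ℝ) (μ : MeasureTheory.Measure X)
    (Cμ : ℝ) : Prop :=
  1 ≤ Cμ ∧ ∀ x r, 0 < r → μ (qball d x (2 * r)) ≤ ENNReal.ofReal Cμ * μ (qball d x r)

/-- All quasi-metric balls have positive finite measure. -/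
def BallsFinite {X : Type*} [MeasurableSpace X] (d : X → X → ℝ)
    (μ : MeasureTheory.Measure X) : Prop :=
  ∀ x r, 0 < r → 0 < μ (qball d x r) ∧ μ (qball d x r) < ⊤

/-- Reverse doubling: `μ(B(x,r/2)) ≤ γ μ(B(x,r))` whenever `B(x,r) ⊊ X`. -/
def IsReverseDoubling {X : Type*} [MeasurableSpace X] (d : X → X → ℝ)
    (μ : MeasureTheory.Measure X) (γ : ℝ) : Prop :=
  0 < γ ∧ γ < 1 ∧ ∀ x r, 0 < r → qball d x r ≠ Set.univ →
    μ (qball d x (r / 2)) ≤ ENNReal.ofReal γ * μ (qball d x r)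

/-- The fractional maximal operator `M_η`. -/
noncomputable def fracMax {X : Type*} [MeasurableSpace X] (d : X → X → ℝ)
    (μ : MeasureTheory.Measure X) (η : ℝ) (f : X → ℝ) (x : X) : ℝ≥0∞ :=
  ⨆ (z : X) (r : ℝ) (_ : 0 < r) (_ : x ∈ qball d z r),
    μ (qball d z r) ^ η * ((μ (qball d z r))⁻¹ * ∫⁻ y in qball d z r, ENNReal.ofReal |f y| ∂μ)

/-- A dyadic grid on a space of homogeneous type (Hytönen–Kairema). -/
def IsDyadicGrid {X : Type*} [MeasurableSpace X] (d : X → X → ℝ)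
    (μ : MeasureTheory.Measure X) (𝒟 : ℤ → Set (Set X)) : Prop :=
  ∃ (C δ ε : ℝ) (xc : Set X → X), 0 < C ∧ 0 < δ ∧ δ < 1 ∧ 0 < ε ∧ ε < 1 ∧
    (∀ k, (𝒟 k).PairwiseDisjoint id ∧ ⋃₀ 𝒟 k = Set.univ) ∧
    (∀ k l, ∀ Q₁ ∈ 𝒟 k, ∀ Q₂ ∈ 𝒟 l, Q₁ ∩ Q₂ = ∅ ∨ Q₁ ⊆ Q₂ ∨ Q₂ ⊆ Q₁) ∧
    (∀ k, ∀ Q₁ ∈ 𝒟 k, ∃ Q₂ ∈ 𝒟 (k + 1), Q₂ ⊆ Q₁) ∧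
    (∀ k, ∀ Q₁ ∈ 𝒟 k, ∃! Q₃, Q₃ ∈ 𝒟 (k - 1) ∧ Q₁ ⊆ Q₃) ∧
    (∀ k, ∀ Q₁ ∈ 𝒟 k, ∀ Q₂ ∈ 𝒟 (k + 1), Q₂ ⊆ Q₁ → ENNReal.ofReal ε * μ Q₁ ≤ μ Q₂) ∧
    (∀ k, ∀ Q ∈ 𝒟 k, MeasurableSet Q ∧
      qball d (xc Q) (δ ^ k) ⊆ Q ∧ Q ⊆ qball d (xc Q) (C * δ ^ k))

/-- The dyadic fractional maximal operator `M^𝒟_η`. -/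
noncomputable def dyadicFracMax {X : Type*} [MeasurableSpace X]
    (μ : MeasureTheory.Measure X) (𝒟 : ℤ → Set (Set X)) (η : ℝ) (f : X → ℝ) (x : X) : ℝ≥0∞ :=
  ⨆ (k : ℤ) (Q ∈ 𝒟 k) (_ : x ∈ Q),
    μ Q ^ η * ((μ Q)⁻¹ * ∫⁻ y in Q, ENNReal.ofReal |f y| ∂μ)

/-- Local log-Hölder continuity with constant `C₀`. -/
def LH0 {X : Type*} (d : X → X → ℝ) (r : X → ℝ) (C₀ : ℝ) : Prop :=
  ∀ x y, d x y < 1 / 2 → |r x - r y| ≤ -C₀ / Real.log (d x y)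

/-- Log-Hölder continuity at infinity with base point `x₀`, constant `Cinf`, limit `rinf`. -/
def LHinf {X : Type*} (d : X → X → ℝ) (r : X → ℝ) (x₀ : X) (Cinf rinf : ℝ) : Prop :=
  ∀ x, |r x - rinf| ≤ Cinf / Real.log (Real.exp 1 + d x x₀)

/-- The modular of the variable Lebesgue space `L^{p(·)}`. -/
noncomputable def vModular {X : Type*} [MeasurableSpace X] (μ : MeasureTheory.Measure X)
    (p : X → ℝ≥0∞) (g : X → ℝ≥0∞) (lam : ℝ≥0∞) : ℝ≥0∞ :=
  (∫⁻ x in {x | p x ≠ ⊤}, (g x / lam) ^ (p x).toReal ∂μ)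
    + lam⁻¹ * essSup g (μ.restrict {x | p x = ⊤})

/-- The Luxemburg norm of the variable Lebesgue space `L^{p(·)}`. -/
noncomputable def vNorm {X : Type*} [MeasurableSpace X] (μ : MeasureTheory.Measure X)
    (p : X → ℝ≥0∞) (g : X → ℝ≥0∞) : ℝ≥0∞ :=
  sInf {lam : ℝ≥0∞ | 0 < lam ∧ vModular μ p g lam ≤ 1}

/-- The fractional integral operator (Riesz potential) `I_η`, applied to `|f|`. -/
noncomputable def fracInt {X : Type*} [MeasurableSpace X] (d : X → X → ℝ)
    (μ : MeasureTheory.Measure X) (η : ℝ) (f : X → ℝ) (x : X) : ℝ≥0∞ :=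
  ∫⁻ y, ENNReal.ofReal |f y| / μ (qball d x (d x y)) ^ (1 - η) ∂μ

-- helper 1: rpow subadditive over finset sums
lemma h1 {ι : Type*} (F : Finset ι) (a : ι → ℝ≥0∞) {p : ℝ} (hp : 0 < p) (hp1 : p ≤ 1) :
    (∑ i ∈ F, a i) ^ p ≤ ∑ i ∈ F, a i ^ p := by
  classical
  induction F using Finset.induction with
  | empty => simp [ENNReal.zero_rpow_of_pos hp]
  | insert _ _ hnotmem ih =>
    rw [Finset.sum_insert hnotmem, Finset.sum_insert hnotmem]
    exact le_trans (ENNReal.rpow_add_le_add_rpow _ _ hp.le hp1) (add_le_add_right ih _)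

-- helper 2: algebra
lemma h2 {a J t : ℝ≥0∞} {p : ℝ} (hp : 0 < p) (ht0 : t ≠ 0) (htt : t ≠ ⊤) (hJ : J ≠ ⊤)
    (h : t * a ^ p ≤ J) : a ≤ (J / t) ^ (1 / p) := by
  have h' : a ^ p ≤ J / t := by
    rw [ENNReal.le_div_iff_mul_le (Or.inl ht0) (Or.inl htt), mul_comm]; exact h
  calc a = (a ^ p) ^ (1 / p) := by
        rw [← ENNReal.rpow_mul, mul_one_div, div_self hp.ne', ENNReal.rpow_one]
    _ ≤ (J / t) ^ (1 / p) := ENNReal.rpow_le_rpow h' (by positivity)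

lemma h3 {a J t : ℝ≥0∞} {p : ℝ} (hp : 0 < p) (ht0 : t ≠ 0) (htt : t ≠ ⊤)
    (h : a ≤ (J / t) ^ (1 / p)) : t * a ^ p ≤ J := by
  have : t * a ^ p ≤ t * ((J / t) ^ (1 / p)) ^ p :=
    mul_le_mul_right (ENNReal.rpow_le_rpow h hp.le) t
  calc t * a ^ p ≤ t * ((J / t) ^ (1 / p)) ^ p := this
    _ = t * (J / t) := by rw [← ENNReal.rpow_mul, one_div_mul_cancel hp.ne', ENNReal.rpow_one]
    _ = J := ENNReal.mul_div_cancel ht0 htt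

-- helper 4: countable disjoint with bounded finite sums
lemma h4 {X : Type*} [MeasurableSpace X] (μ : Measure X) (S : Set (Set X)) (M : ℝ≥0∞)
    (hM : M ≠ ⊤) (hpos : ∀ A ∈ S, 0 < μ A)
    (hsum : ∀ F : Finset (Set X), ↑F ⊆ S → ∑ A ∈ F, μ A ≤ M) :
    μ (⋃₀ S) ≤ M := by
  classical
  have hcnt : S.Countable := by
    have hsub : S ⊆ ⋃ n : ℕ, {A | A ∈ S ∧ ((n : ℝ≥0∞))⁻¹ < μ A} := by
      intro A hA
      obtain ⟨n, hn⟩ := ENNReal.exists_inv_nat_lt (hpos A hA).ne'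
      exact Set.mem_iUnion.2 ⟨n, hA, hn⟩
    refine (Set.countable_iUnion fun n => Set.Finite.countable ?_).mono hsub
    by_contra hfin
    have hinf : {A | A ∈ S ∧ ((n : ℝ≥0∞))⁻¹ < μ A}.Infinite := hfin
    -- n ≠ 0 since otherwise the set is empty
    have hn0 : (n : ℝ≥0∞) ≠ 0 := by
      rintro h
      obtain ⟨A, hA⟩ := hinf.nonempty
      simp [h] at hA
    -- get arbitrarily large finite subfamilies
    have hbound : ∀ k : ℕ, (k : ℝ≥0∞) * ((n : ℝ≥0∞))⁻¹ ≤ M := by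
      intro k
      obtain ⟨u, hu, hufin, hucard⟩ := hinf.exists_subset_ncard_eq k
      have hF : (hufin.toFinset : Set (Set X)) ⊆ S := by
        intro A hA
        simp only [Set.Finite.coe_toFinset] at hA
        exact (hu hA).1
      have hcard : hufin.toFinset.card = k := by
        rw [← Set.ncard_eq_toFinset_card u hufin]; exact hucard
      calc (k : ℝ≥0∞) * ((n : ℝ≥0∞))⁻¹ = hufin.toFinset.card • ((n : ℝ≥0∞))⁻¹ := by
            rw [hcard, nsmul_eq_mul]
        _ ≤ ∑ A ∈ hufin.toFinset, μ A := by
            refine Finset.card_nsmul_le_sum _ _ _ ?_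
            intro A hA
            simp only [Set.Finite.mem_toFinset] at hA
            exact (hu hA).2.le
        _ ≤ M := hsum _ hF
    have hk : ∀ k : ℕ, (k : ℝ≥0∞) ≤ M * n := by
      intro k
      have := mul_le_mul_left (hbound k) (n : ℝ≥0∞)
      rwa [mul_assoc, ENNReal.inv_mul_cancel hn0 (natCast_ne_top n), mul_one] at this
    have : (⊤ : ℝ≥0∞) ≤ M * n := by
      rw [← ENNReal.iSup_natCast]; exact iSup_le hk
    exact (ENNReal.mul_ne_top hM (natCast_ne_top n)) (top_le_iff.mp this)
  haveI := hcnt.to_subtype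
  calc μ (⋃₀ S) = μ (⋃ A : S, (A : Set X)) := by rw [Set.sUnion_eq_iUnion]
    _ ≤ ∑' A : S, μ A := measure_iUnion_le _
    _ ≤ M := by
        rw [ENNReal.tsum_eq_iSup_sum]
        refine iSup_le fun F => ?_
        have : ∑ i ∈ F, μ (i : Set X) = ∑ A ∈ F.image Subtype.val, μ A :=
          (Finset.sum_image (by intro x _ y _ h; exact Subtype.val_injective h)).symm
        rw [this]
        refine hsum _ ?_
        intro A hA
        simp only [Finset.coe_image, Set.mem_image, Finset.mem_coe] at hA
        obtain ⟨⟨B, hB⟩, _, rfl⟩ := hA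
        exact hB

/-- Weak `(1, 1/(1-η))` inequality for the dyadic fractional maximal operator. -/
theorem stmt10 {X : Type*} [MeasurableSpace X] (d : X → X → ℝ) (μ : MeasureTheory.Measure X)
    (A₀ Cμ : ℝ) (hqm : IsQuasiMetric d A₀) (hdb : IsDoubling d μ Cμ) (hb : BallsFinite d μ)
    (𝒟 : ℤ → Set (Set X)) (h𝒟 : IsDyadicGrid d μ 𝒟)
    (η s : ℝ) (hη0 : 0 < η) (hη1 : η < 1) (hs : s = 1 / (1 - η))
    (f : X → ℝ) (hf : MeasureTheory.Integrable f μ) :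
    ∀ t : ℝ, 0 < t →
      ENNReal.ofReal t * μ {x | ENNReal.ofReal t < dyadicFracMax μ 𝒟 η f x} ^ (1 / s) ≤
        ∫⁻ x, ENNReal.ofReal |f x| ∂μ := by

  classical
  obtain ⟨C, δ, ε, xc, hC, hδ0, hδ1, hε0, hε1, hpart, hnest, hchild, hparent, hratio, hball⟩ := h𝒟
  intro t ht
  set I := ∫⁻ x, ENNReal.ofReal |f x| ∂μ with hIdef
  have hIne : I ≠ ⊤ := by
    have h2' := hf.2
    rw [HasFiniteIntegral] at h2'
    refine ne_of_lt (lt_of_le_of_lt (le_of_eq ?_) h2')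
    exact lintegral_congr fun x => (Real.enorm_eq_ofReal_abs (f x)).symm
  set p := 1 - η with hpdef
  have hp : 0 < p := by rw [hpdef]; linarith
  have hp1 : p ≤ 1 := by rw [hpdef]; linarith
  have hps : 1 / s = p := by rw [hs, hpdef, one_div_one_div]
  have ht0 : (ENNReal.ofReal t) ≠ 0 := (ENNReal.ofReal_pos.2 ht).ne'
  have htt : (ENNReal.ofReal t) ≠ ⊤ := ENNReal.ofReal_ne_top
  have hcube : ∀ k : ℤ, ∀ Q ∈ 𝒟 k, MeasurableSet Q ∧ 0 < μ Q ∧ μ Q ≠ ⊤ := by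
    intro k Q hQ
    obtain ⟨hm, hsub, hsup⟩ := hball k Q hQ
    have h1' : (0:ℝ) < δ ^ k := zpow_pos hδ0 k
    exact ⟨hm, lt_of_lt_of_le (hb _ _ h1').1 (measure_mono hsub),
      (lt_of_le_of_lt (measure_mono hsup) (hb _ _ (by positivity)).2).ne⟩
  set E := {x | ENNReal.ofReal t < dyadicFracMax μ 𝒟 η f x} with hEdef
  have hiff : ∀ (k : ℤ), ∀ Q ∈ 𝒟 k,
      (ENNReal.ofReal t < μ Q ^ η * ((μ Q)⁻¹ * ∫⁻ y in Q, ENNReal.ofReal |f y| ∂μ) ↔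
        ENNReal.ofReal t * μ Q ^ p < ∫⁻ y in Q, ENNReal.ofReal |f y| ∂μ) := by
    intro k Q hQ
    obtain ⟨-, hQ0, hQt⟩ := hcube k Q hQ
    have e1 : μ Q ^ η * (μ Q)⁻¹ = (μ Q ^ p)⁻¹ := by
      rw [← ENNReal.rpow_neg_one, ← ENNReal.rpow_add _ _ hQ0.ne' hQt, ← ENNReal.rpow_neg]
      congr 1
      rw [hpdef]; ring
    have hb0 : μ Q ^ p ≠ 0 := (ENNReal.rpow_pos hQ0 hQt).ne'
    have hbt : μ Q ^ p ≠ ⊤ := (ENNReal.rpow_lt_top_of_nonneg hp.le hQt).ne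
    rw [← mul_assoc, e1, ← ENNReal.div_eq_inv_mul]
    exact ENNReal.lt_div_iff_mul_lt (Or.inl hb0) (Or.inl hbt)
  have hmemE : ∀ x, x ∈ E ↔ ∃ k : ℤ, ∃ Q ∈ 𝒟 k, x ∈ Q ∧
      ENNReal.ofReal t * μ Q ^ p < ∫⁻ y in Q, ENNReal.ofReal |f y| ∂μ := by
    intro x
    rw [hEdef]
    simp only [Set.mem_setOf_eq, dyadicFracMax, lt_iSup_iff]
    constructor
    · rintro ⟨k, Q, hQ, hx, hlt⟩; exact ⟨k, Q, hQ, hx, (hiff k Q hQ).1 hlt⟩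
    · rintro ⟨k, Q, hQ, hx, hlt⟩; exact ⟨k, Q, hQ, hx, (hiff k Q hQ).2 hlt⟩
  set Tst : X → Set (Set X) := fun x => {Q | (∃ k : ℤ, Q ∈ 𝒟 k ∧
      ENNReal.ofReal t * μ Q ^ p < ∫⁻ y in Q, ENNReal.ofReal |f y| ∂μ) ∧ x ∈ Q} with hTstdef
  set T : X → Set X := fun x => ⋃₀ Tst x with hTdef
  have hchn : ∀ x, ∀ Q ∈ Tst x, ∀ Q' ∈ Tst x, Q ⊆ Q' ∨ Q' ⊆ Q := by
    rintro x Q ⟨⟨k, hk, -⟩, hxQ⟩ Q' ⟨⟨k', hk', -⟩, hxQ'⟩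
    rcases hnest k k' Q hk Q' hk' with h | h | h
    · exact absurd (Set.mem_inter hxQ hxQ') (by simp [h])
    · exact Or.inl h
    · exact Or.inr h
  have hTcnt : ∀ x, (Tst x).Countable := by
    intro x
    have hsub : Tst x ⊆ ⋃ k : ℤ, {Q | Q ∈ 𝒟 k ∧ x ∈ Q} := by
      rintro Q ⟨⟨k, hk, -⟩, hxQ⟩; exact Set.mem_iUnion.2 ⟨k, hk, hxQ⟩
    refine (Set.countable_iUnion fun k => Set.Subsingleton.countable ?_).mono hsub
    rintro Q ⟨hQ, hxQ⟩ Q' ⟨hQ', hxQ'⟩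
    by_contra hne
    exact Set.disjoint_left.mp ((hpart k).1 hQ hQ' hne) hxQ hxQ'
  have hTm : ∀ x, MeasurableSet (T x) := by
    intro x
    refine MeasurableSet.sUnion (hTcnt x) ?_
    rintro Q ⟨⟨k, hk, -⟩, -⟩; exact (hcube k Q hk).1
  have hμT : ∀ x, μ (T x) = ⨆ Q : Tst x, μ (Q : Set X) := by
    intro x
    haveI := (hTcnt x).to_subtype
    show μ (⋃₀ Tst x) = _
    rw [Set.sUnion_eq_iUnion]
    refine Directed.measure_iUnion ?_
    rintro ⟨Q, hQ⟩ ⟨Q', hQ'⟩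
    rcases hchn x Q hQ Q' hQ' with h | h
    · exact ⟨⟨Q', hQ'⟩, h, subset_rfl⟩
    · exact ⟨⟨Q, hQ⟩, subset_rfl, h⟩
  have hTbound : ∀ x, ENNReal.ofReal t * μ (T x) ^ p ≤ ∫⁻ y in T x, ENNReal.ofReal |f y| ∂μ := by
    intro x
    set J := ∫⁻ y in T x, ENNReal.ofReal |f y| ∂μ with hJdef
    have hJI : J ≤ I := by rw [hIdef, hJdef]; exact setLIntegral_le_lintegral _ _
    have hJt : J ≠ ⊤ := (lt_of_le_of_lt hJI hIne.lt_top).ne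
    refine h3 hp ht0 htt ?_
    rw [hμT x]
    refine iSup_le ?_
    rintro ⟨Q, hQmem⟩
    have hQsub : Q ⊆ T x := Set.subset_sUnion_of_mem hQmem
    obtain ⟨⟨k, hk, hlt⟩, hxQ⟩ := hQmem
    refine h2 hp ht0 htt hJt (le_trans hlt.le ?_)
    exact lintegral_mono' (Measure.restrict_mono hQsub le_rfl) le_rfl
  have hkey : ∀ x y R, R ∈ Tst x → R ∈ Tst y → T y ⊆ T x := by
    intro x y R hRx hRy
    refine Set.sUnion_subset fun S hSy => ?_
    rcases hchn y S hSy R hRy with h | h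
    · exact h.trans (Set.subset_sUnion_of_mem hRx)
    · exact Set.subset_sUnion_of_mem ⟨hSy.1, h hRx.2⟩
  have hTdisj : ∀ x y, T x = T y ∨ Disjoint (T x) (T y) := by
    intro x y
    by_cases hd : Disjoint (T x) (T y)
    · exact Or.inr hd
    left
    obtain ⟨z, hzx, hzy⟩ := Set.not_disjoint_iff.mp hd
    obtain ⟨Q, hQx, hzQ⟩ := hzx
    obtain ⟨Q', hQy, hzQ'⟩ := hzy
    obtain ⟨⟨k, hk, hltQ⟩, hxQ⟩ := hQx
    obtain ⟨⟨k', hk', hltQ'⟩, hyQ'⟩ := hQy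
    have hQx' : Q ∈ Tst x := ⟨⟨k, hk, hltQ⟩, hxQ⟩
    have hQy' : Q' ∈ Tst y := ⟨⟨k', hk', hltQ'⟩, hyQ'⟩
    rcases hnest k k' Q hk Q' hk' with h | h | h
    · exact absurd (Set.mem_inter hzQ hzQ') (by simp [h])
    · have hR : Q' ∈ Tst x := ⟨⟨k', hk', hltQ'⟩, h hxQ⟩
      exact Set.Subset.antisymm (hkey y x Q' hQy' hR) (hkey x y Q' hR hQy')
    · have hR : Q ∈ Tst y := ⟨⟨k, hk, hltQ⟩, h hyQ'⟩
      exact Set.Subset.antisymm (hkey y x Q hR hQx') (hkey x y Q hQx' hR)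
  have hEeq : E = ⋃₀ (T '' E) := by
    apply Set.Subset.antisymm
    · intro x hx
      obtain ⟨k, Q, hQ, hxQ, hlt⟩ := (hmemE x).1 hx
      exact ⟨T x, ⟨x, hx, rfl⟩, Q, ⟨⟨k, hQ, hlt⟩, hxQ⟩, hxQ⟩
    · rintro z ⟨A, ⟨x, hx, rfl⟩, hzA⟩
      obtain ⟨Q, hQmem, hzQ⟩ := hzA
      obtain ⟨⟨k, hk, hlt⟩, -⟩ := hQmem
      exact (hmemE z).2 ⟨k, Q, hk, hzQ, hlt⟩
  set M : ℝ≥0∞ := (I / ENNReal.ofReal t) ^ (1 / p) with hMdef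
  have hMt : M ≠ ⊤ := by
    rw [hMdef]
    exact (ENNReal.rpow_lt_top_of_nonneg (by positivity) (ENNReal.div_lt_top hIne ht0).ne).ne
  have hsumF : ∀ F : Finset (Set X), ↑F ⊆ T '' E → ∑ A ∈ F, μ A ≤ M := by
    intro F hF
    refine h2 hp ht0 htt hIne ?_
    have hA : ∀ A ∈ F, ∃ x, x ∈ E ∧ T x = A := by
      intro A hAF
      obtain ⟨x, hx, hxA⟩ := hF hAF
      exact ⟨x, hx, hxA⟩
    have hdisj : (↑F : Set (Set X)).PairwiseDisjoint id := by
      intro A hAF B hBF hAB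
      obtain ⟨x, -, rfl⟩ := hA A hAF
      obtain ⟨y, -, rfl⟩ := hA B hBF
      rcases hTdisj x y with h | h
      · exact absurd h hAB
      · exact h
    have hmeas : ∀ A ∈ F, MeasurableSet A := by
      intro A hAF
      obtain ⟨x, -, rfl⟩ := hA A hAF
      exact hTm x
    calc ENNReal.ofReal t * (∑ A ∈ F, μ A) ^ p
        ≤ ENNReal.ofReal t * ∑ A ∈ F, μ A ^ p := mul_le_mul_right (h1 F _ hp hp1) _
      _ = ∑ A ∈ F, ENNReal.ofReal t * μ A ^ p := Finset.mul_sum _ _ _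
      _ ≤ ∑ A ∈ F, ∫⁻ y in A, ENNReal.ofReal |f y| ∂μ := by
          refine Finset.sum_le_sum fun A hAF => ?_
          obtain ⟨x, -, rfl⟩ := hA A hAF
          exact hTbound x
      _ = ∫⁻ y in ⋃ A ∈ F, A, ENNReal.ofReal |f y| ∂μ :=
          (lintegral_biUnion_finset hdisj hmeas _).symm
      _ ≤ I := by rw [hIdef]; exact setLIntegral_le_lintegral _ _
  have hpos : ∀ A ∈ T '' E, 0 < μ A := by
    rintro A ⟨x, hx, rfl⟩
    obtain ⟨k, Q, hQ, hxQ, hlt⟩ := (hmemE x).1 hx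
    have hQT : Q ⊆ T x := Set.subset_sUnion_of_mem ⟨⟨k, hQ, hlt⟩, hxQ⟩
    exact lt_of_lt_of_le (hcube k Q hQ).2.1 (measure_mono hQT)
  have hEM : μ E ≤ M := by
    rw [hEeq]
    exact h4 μ _ M hMt hpos hsumF
  rw [hps]
  exact h3 hp ht0 htt hEM
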